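/- Let Γ be a finite graph and f : Γ → Γ a graph map sending edges to reduced edge paths. The repelling edges of the derived graph D_f are in bijection with occurrences of edges E in the path f(E) (over all edges E of Γ), and the attracting edges of D_f are in bijection with occurrences of Ē in f(E). In particular, the number of exceptional (repelling or attracting) edges of D_f is finite, bounded by the total length of the images f(E) over all edges E. -/

import Mathlib

/-- A graph given by oriented edges with an involution reversing orientation. -/
structure CGraph where
  V : Type
  E : Type
  src : E → V
  bar : E → E
  bar_involutive : Function.Involutive bar
  bar_ne : ∀ e : E, bar e ≠ e

/-- Terminal vertex of an oriented edge. -/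
def CGraph.tgt (Γ : CGraph) (e : Γ.E) : Γ.V := Γ.src (Γ.bar e)

/-- A list of edges is an edge path: consecutive edges are incident. -/
def CGraph.IsEdgePath (Γ : CGraph) (l : List Γ.E) : Prop :=
  List.Chain' (fun a b => Γ.tgt a = Γ.src b) l

/-- A reduced edge path: an edge path with no backtracking. -/
def CGraph.IsReduced (Γ : CGraph) (l : List Γ.E) : Prop :=
  Γ.IsEdgePath l ∧ List.Chain' (fun a b => b ≠ Γ.bar a) l

/-- A graph map sending vertices to vertices and edges to nontrivial reduced edge
paths, compatibly with incidence and edge reversal. -/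
structure GraphMap (Γ : CGraph) where
  vMap : Γ.V → Γ.V
  eMap : Γ.E → List Γ.E
  eMap_ne : ∀ e : Γ.E, eMap e ≠ []
  eMap_reduced : ∀ e : Γ.E, Γ.IsReduced (eMap e)
  eMap_src : ∀ (e a : Γ.E), (eMap e).head? = some a → Γ.src a = vMap (Γ.src e)
  eMap_bar : ∀ e : Γ.E, eMap (Γ.bar e) = ((eMap e).map Γ.bar).reverse

/-- Free reduction of an edge path. -/
def CGraph.red (Γ : CGraph) [DecidableEq Γ.E] (l : List Γ.E) : List Γ.E :=
  l.foldr (fun a r => match r with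
    | [] => [a]
    | b :: t => if b = Γ.bar a then t else a :: b :: t) []

/-- A vertex of the graph `D_f`: a reduced `f`-path `μ` based at `v`
(the trivial path at `v` requires `f(v) = v`). -/
def IsFPath (Γ : CGraph) (f : GraphMap Γ) (v : Γ.V) (μ : List Γ.E) : Prop :=
  Γ.IsReduced μ ∧ (μ = [] → f.vMap v = v) ∧
  (∀ a : Γ.E, μ.head? = some a → Γ.src a = v) ∧
  (∀ a : Γ.E, μ.getLast? = some a → Γ.tgt a = f.vMap v)

/-- The repelling edges of `D_f`, encoded as triples `(v, μ, e)`: the `D_f`-edge with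
label `e` from the vertex `μ` (based at `v`); repelling means `e` is not the first
edge of `μ` and `ē` is not the first edge of the target `[ē μ f(e)]`. -/
def RepSet (Γ : CGraph) [DecidableEq Γ.E] (f : GraphMap Γ) :
    Set (Γ.V × List Γ.E × Γ.E) :=
  {x | IsFPath Γ f x.1 x.2.1 ∧ Γ.src x.2.2 = x.1 ∧
    x.2.1.head? ≠ some x.2.2 ∧
    (Γ.red (Γ.bar x.2.2 :: (x.2.1 ++ f.eMap x.2.2))).head? ≠ some (Γ.bar x.2.2)}

/-- The attracting edges of `D_f`: `e` is the first edge of `μ` and `ē` is the first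
edge of the target `[ē μ f(e)]`. -/
def AttSet (Γ : CGraph) [DecidableEq Γ.E] (f : GraphMap Γ) :
    Set (Γ.V × List Γ.E × Γ.E) :=
  {x | IsFPath Γ f x.1 x.2.1 ∧ Γ.src x.2.2 = x.1 ∧
    x.2.1.head? = some x.2.2 ∧
    (Γ.red (Γ.bar x.2.2 :: (x.2.1 ++ f.eMap x.2.2))).head? = some (Γ.bar x.2.2)}

/-- Occurrences of the edge `e` in the path `f(e)`. -/
def OccRep (Γ : CGraph) (f : GraphMap Γ) : Set (Γ.E × ℕ) :=
  {p | (f.eMap p.1)[p.2]? = some p.1}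

/-- Occurrences of the edge `ē` in the path `f(e)`. -/
def OccAtt (Γ : CGraph) (f : GraphMap Γ) : Set (Γ.E × ℕ) :=
  {p | (f.eMap p.1)[p.2]? = some (Γ.bar p.1)}

namespace CGraph
variable (Γ : CGraph) [DecidableEq Γ.E]

/-- One step of reduction. -/
def step (a : Γ.E) (r : List Γ.E) : List Γ.E :=
  match r with
  | [] => [a]
  | b :: t => if b = Γ.bar a then t else a :: b :: t

lemma red_nil : Γ.red [] = [] := rfl

lemma red_cons (a : Γ.E) (l : List Γ.E) : Γ.red (a :: l) = Γ.step a (Γ.red l) := rfl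

/-- no-cancellation chain predicate -/
abbrev NB (a b : Γ.E) : Prop := b ≠ Γ.bar a

lemma red_of_chain' {l : List Γ.E} (h : List.Chain' Γ.NB l) : Γ.red l = l := by
  induction l with
  | nil => rfl
  | cons a l ih =>
    rw [red_cons, ih h.tail]
    cases l with
    | nil => rfl
    | cons b t =>
      simp only [step, if_neg (List.isChain_cons_cons.mp h).1]

def brev (l : List Γ.E) : List Γ.E := (l.map Γ.bar).reverse

lemma brev_chain' {P : Γ.E → Γ.E → Prop} (hP : ∀ a b, P a b → P (Γ.bar b) (Γ.bar a))
    {l : List Γ.E} (h : List.Chain' P l) : List.Chain' P (Γ.brev l) := by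
  show List.IsChain P _
  rw [brev, List.isChain_reverse, List.isChain_map]
  exact h.imp fun a b hab => hP a b hab

end CGraph
namespace CGraph
variable (Γ : CGraph) [DecidableEq Γ.E]

set_option linter.unusedSectionVars false

lemma step_nil (a : Γ.E) : Γ.step a [] = [a] := rfl

lemma step_cons (a b : Γ.E) (t : List Γ.E) :
    Γ.step a (b :: t) = if b = Γ.bar a then t else a :: b :: t := rfl

lemma brev_take_succ {w : List Γ.E} {m : ℕ} (hm : m < w.length) :
    Γ.brev (w.take (m + 1)) = Γ.bar w[m] :: Γ.brev (w.take m) := by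
  rw [brev, brev, List.map_take, List.map_take, List.take_succ, List.getElem?_map,
    List.getElem?_eq_getElem hm]
  simp

lemma red_brev_take {w : List Γ.E} (hw : List.Chain' Γ.NB w) (m : ℕ) :
    Γ.red (Γ.brev (w.take m) ++ w) = w.drop m := by
  induction m with
  | zero => simpa [brev] using Γ.red_of_chain' hw
  | succ m ih =>
    rcases lt_or_ge m w.length with hm | hm
    · rw [Γ.brev_take_succ hm, List.cons_append, red_cons, ih,
        List.drop_eq_getElem_cons hm, step_cons, if_pos (Γ.bar_involutive w[m]).symm]
    · have h1 : w.take (m+1) = w.take m := by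
        rw [List.take_of_length_le (by omega), List.take_of_length_le hm]
      rw [h1, ih, List.drop_of_length_le hm, List.drop_of_length_le (by omega)]

/-- Main structural lemma: reduction of a concatenation of two chains cancels a
suffix of the first against a prefix of the second. -/
lemma red_append {μ w : List Γ.E} (hμ : List.Chain' Γ.NB μ) (hw : List.Chain' Γ.NB w) :
    ∃ k, k ≤ μ.length ∧ k ≤ w.length ∧ μ.drop (μ.length - k) = Γ.brev (w.take k) ∧
      Γ.red (μ ++ w) = μ.take (μ.length - k) ++ w.drop k ∧
      List.Chain' Γ.NB (Γ.red (μ ++ w)) := by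
  induction μ with
  | nil =>
    exact ⟨0, by simp [brev, Γ.red_of_chain' hw, hw]⟩
  | cons a μ' ih =>
    obtain ⟨k, hk1, hk2, hdrop, hred, hch⟩ := ih hμ.tail
    rcases lt_or_eq_of_le hk1 with hlt | heq
    · -- take part nonempty: no further cancellation
      obtain ⟨b, t, rfl⟩ : ∃ b t, μ' = b :: t := by
        cases μ' with
        | nil => simp at hlt
        | cons b t => exact ⟨b, t, rfl⟩
      have hkt : k ≤ t.length := by rw [List.length_cons] at hlt; omega
      have hba : b ≠ Γ.bar a := (List.isChain_cons_cons.mp hμ).1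
      have hL : (b :: t).length - k = (t.length - k) + 1 := by
        rw [List.length_cons]; omega
      have hred2 : Γ.red ((a :: b :: t) ++ w)
          = a :: ((b :: t).take ((b :: t).length - k) ++ w.drop k) := by
        rw [List.cons_append, red_cons, hred, hL, List.take_succ_cons, List.cons_append,
          step_cons, if_neg hba]
      refine ⟨k, by rw [List.length_cons]; omega, hk2, ?_, ?_, ?_⟩
      · rw [show (a :: b :: t).length - k = ((b :: t).length - k) + 1 by
          simp only [List.length_cons]; omega, List.drop_succ_cons, hdrop]
      · rw [hred2, show (a :: b :: t).length - k = ((b :: t).length - k) + 1 by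
          simp only [List.length_cons]; omega, List.take_succ_cons]
        simp
      · rw [hred2]
        have hch' : List.Chain' Γ.NB ((b :: t).take ((b :: t).length - k) ++ w.drop k) := by
          rwa [hred] at hch
        rw [hL, List.take_succ_cons] at hch' ⊢
        rw [List.cons_append] at hch' ⊢
        exact List.isChain_cons_cons.mpr ⟨hba, hch'⟩
    · -- full cancellation of μ' so far
      have hdrop' : μ' = Γ.brev (w.take k) := by simpa [heq] using hdrop
      have hred' : Γ.red (μ' ++ w) = w.drop k := by simpa [heq] using hred
      rcases hD : w.drop k with _ | ⟨b, t⟩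
      · -- w exhausted
        refine ⟨k, by rw [List.length_cons]; omega, hk2, ?_, ?_, ?_⟩
        · rw [show (a :: μ').length - k = 1 by rw [List.length_cons]; omega,
            List.drop_one, List.tail_cons, hdrop']
        · rw [List.cons_append, red_cons, hred', hD,
            show (a :: μ').length - k = 1 by rw [List.length_cons]; omega]
          rfl
        · rw [List.cons_append, red_cons, hred', hD, step_nil]
          exact List.isChain_singleton _
      · have hkw : k < w.length := by
          by_contra h
          rw [List.drop_of_length_le (by omega)] at hD
          exact (List.cons_ne_nil _ _) hD.symm
        have hbt : w[k] = b ∧ w.drop (k+1) = t := by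
          rw [List.drop_eq_getElem_cons hkw] at hD
          exact ⟨(List.cons.injEq .. ▸ hD).1, (List.cons.injEq .. ▸ hD).2⟩
        by_cases hcan : b = Γ.bar a
        · -- a cancels with w[k]
          refine ⟨k + 1, by rw [List.length_cons]; omega, by omega, ?_, ?_, ?_⟩
          · rw [show (a :: μ').length - (k+1) = 0 by rw [List.length_cons]; omega,
              List.drop_zero, Γ.brev_take_succ hkw, hbt.1, hcan,
              Γ.bar_involutive a, ← hdrop']
          · rw [List.cons_append, red_cons, hred', hD, step_cons, if_pos hcan,
              show (a :: μ').length - (k+1) = 0 by rw [List.length_cons]; omega,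
              List.take_zero, List.nil_append, hbt.2]
          · rw [List.cons_append, red_cons, hred', hD, step_cons, if_pos hcan]
            have : List.Chain' Γ.NB (b :: t) := by rwa [hred', hD] at hch
            exact this.tail
        · -- no cancellation
          refine ⟨k, by rw [List.length_cons]; omega, hk2, ?_, ?_, ?_⟩
          · rw [show (a :: μ').length - k = 1 by rw [List.length_cons]; omega,
              List.drop_one, List.tail_cons, hdrop']
          · rw [List.cons_append, red_cons, hred', hD, step_cons, if_neg hcan,
              show (a :: μ').length - k = 1 by rw [List.length_cons]; omega,
              ← hD]
            rfl
          · rw [List.cons_append, red_cons, hred', hD, step_cons, if_neg hcan]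
            have : List.Chain' Γ.NB (b :: t) := by rwa [hred', hD] at hch
            exact List.isChain_cons_cons.mpr ⟨hcan, this⟩
end CGraph
namespace CGraph
variable (Γ : CGraph) [DecidableEq Γ.E]

set_option linter.unusedSectionVars false

lemma brev_head? (l : List Γ.E) : (Γ.brev l).head? = l.getLast?.map Γ.bar := by
  simp [brev, List.head?_reverse, List.getLast?_map]

lemma brev_getLast? (l : List Γ.E) : (Γ.brev l).getLast? = l.head?.map Γ.bar := by
  simp [brev, List.getLast?_reverse, List.head?_map]

lemma getLast?_take {l : List Γ.E} {n : ℕ} (h1 : 1 ≤ n) (h2 : n ≤ l.length) :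
    (l.take n).getLast? = l[n-1]? := by
  rw [List.getLast?_eq_getElem?, List.length_take, min_eq_left h2, List.getElem?_take,
    if_pos (by omega)]

lemma brev_reduced {l : List Γ.E} (h : Γ.IsReduced l) : Γ.IsReduced (Γ.brev l) := by
  refine ⟨Γ.brev_chain' ?_ h.1, Γ.brev_chain' ?_ h.2⟩
  · intro a b hab
    show Γ.tgt (Γ.bar b) = Γ.src (Γ.bar a)
    rw [tgt, Γ.bar_involutive]
    rw [tgt] at hab
    exact hab.symm
  · intro a b hab
    show Γ.bar a ≠ Γ.bar (Γ.bar b)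
    rw [Γ.bar_involutive]
    exact fun h' => hab (h' ▸ rfl)

lemma reduced_take {l : List Γ.E} (h : Γ.IsReduced l) (n : ℕ) :
    Γ.IsReduced (l.take n) := ⟨h.1.take n, h.2.take n⟩

/-- `brev (take n (f e))` is an f-path at `src e`, given head conditions. -/
lemma fpath_brev_take (f : GraphMap Γ) (e : Γ.E) (n : ℕ) (hn : n ≤ (f.eMap e).length)
    (h0 : n = 0 → f.vMap (Γ.src e) = Γ.src e)
    (hhead : ∀ a, (Γ.brev ((f.eMap e).take n)).head? = some a → Γ.src a = Γ.src e) :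
    IsFPath Γ f (Γ.src e) (Γ.brev ((f.eMap e).take n)) := by
  refine ⟨Γ.brev_reduced (Γ.reduced_take (f.eMap_reduced e) n), ?_, hhead, ?_⟩
  · intro hemp
    apply h0
    by_contra hn0
    have hw := f.eMap_ne e
    have : ((f.eMap e).take n).length = 0 := by
      have : Γ.brev ((f.eMap e).take n) = [] := hemp
      simpa [brev] using congrArg List.length this
    rw [List.length_take] at this
    omega
  · intro a ha
    rw [brev_getLast?] at ha
    rcases hh : ((f.eMap e).take n).head? with _ | b
    · rw [hh, Option.map_none] at ha; exact absurd ha (by simp)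
    · rw [hh, Option.map_some] at ha
      have hb : (f.eMap e).head? = some b := by
        rcases Nat.eq_zero_or_pos n with rfl | hpos
        · simp at hh
        · rwa [List.head?_take, if_neg (by omega)] at hh
      have hsrc := f.eMap_src e b hb
      rw [← Option.some_inj.mp ha, tgt, Γ.bar_involutive]
      exact hsrc

end CGraph
namespace CGraph
variable (Γ : CGraph) [DecidableEq Γ.E]

set_option linter.unusedSectionVars false

lemma chain'_rel {α : Type} {R : α → α → Prop} {l : List α} (h : List.Chain' R l) {i : ℕ}
    (hi : i + 1 < l.length) : R l[i] l[i+1] := by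
  have := List.isChain_iff_getElem.mp h i (by omega)
  simpa using this

lemma brev_take_head {w : List Γ.E} {n : ℕ} (h1 : 1 ≤ n) (h2 : n ≤ w.length) :
    (Γ.brev (w.take n)).head? = some (Γ.bar (w[n-1]'(by omega))) := by
  rw [brev_head?, Γ.getLast?_take h1 h2, List.getElem?_eq_getElem (by omega),
    Option.map_some]

lemma toRep_mem (f : GraphMap Γ) {e : Γ.E} {n : ℕ} (h : (e, n) ∈ OccRep Γ f) :
    (Γ.src e, Γ.brev ((f.eMap e).take n), e) ∈ RepSet Γ f := by
  obtain ⟨hn, hgn⟩ := List.getElem?_eq_some_iff.mp (show (f.eMap e)[n]? = some e from h)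
  have hch : List.Chain' Γ.NB (f.eMap e) := (f.eMap_reduced e).2
  have hpath : List.Chain' (fun a b => Γ.tgt a = Γ.src b) (f.eMap e) := (f.eMap_reduced e).1
  refine ⟨?_, rfl, ?_, ?_⟩
  · refine Γ.fpath_brev_take f e n (by omega) ?_ ?_
    · rintro rfl
      have hb : (f.eMap e).head? = some e := by
        rw [List.head?_eq_getElem?, List.getElem?_eq_getElem hn, hgn]
      exact (f.eMap_src e e hb).symm
    · intro a ha
      rcases Nat.eq_zero_or_pos n with rfl | hpos
      · simp [brev] at ha
      · rw [Γ.brev_take_head hpos (by omega)] at ha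
        have hrel : Γ.tgt ((f.eMap e)[n-1]'(by omega)) = Γ.src ((f.eMap e)[(n-1)+1]'(by omega)) :=
          chain'_rel hpath (by omega)
        rw [← Option.some_inj.mp ha]
        show Γ.src (Γ.bar _) = _
        rw [← tgt, hrel]
        have : (f.eMap e)[(n-1)+1]'(by omega) = (f.eMap e)[n]'hn := by congr 1; omega
        rw [this, hgn]
  · -- e is not the first edge of μ
    show (Γ.brev ((f.eMap e).take n)).head? ≠ some e
    rcases Nat.eq_zero_or_pos n with rfl | hpos
    · simp [brev]
    · rw [Γ.brev_take_head hpos (by omega)]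
      intro hcon
      have hW : (f.eMap e)[n-1]'(by omega) = Γ.bar e := by
        have := congrArg Γ.bar (Option.some_inj.mp hcon)
        rwa [Γ.bar_involutive] at this
      have hrel : Γ.NB ((f.eMap e)[n-1]'(by omega)) ((f.eMap e)[(n-1)+1]'(by omega)) :=
        chain'_rel hch (by omega)
      apply hrel
      rw [hW]
      have : (f.eMap e)[(n-1)+1]'(by omega) = (f.eMap e)[n]'hn := by congr 1; omega
      rw [this, hgn, Γ.bar_involutive]
  · -- bar e is not the first edge of the reduction
    show (Γ.red (Γ.bar e :: (Γ.brev ((f.eMap e).take n) ++ f.eMap e))).head? ≠ some (Γ.bar e)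
    have hkey : Γ.bar e :: (Γ.brev ((f.eMap e).take n) ++ f.eMap e)
        = Γ.brev ((f.eMap e).take (n+1)) ++ f.eMap e := by
      rw [Γ.brev_take_succ hn, hgn, List.cons_append]
    rw [hkey, Γ.red_brev_take hch (n+1), List.head?_drop]
    rcases hx : (f.eMap e)[n+1]? with _ | b
    · simp
    · obtain ⟨hn1, hb⟩ := List.getElem?_eq_some_iff.mp hx
      intro hcon
      have hbb : b = Γ.bar e := Option.some_inj.mp hcon
      have hrel : Γ.NB ((f.eMap e)[n]'hn) ((f.eMap e)[n+1]'hn1) := chain'_rel hch (by omega)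
      exact hrel (by rw [hb, hbb, hgn])

lemma toAtt_mem (f : GraphMap Γ) {e : Γ.E} {m : ℕ} (h : (e, m) ∈ OccAtt Γ f) :
    (Γ.src e, Γ.brev ((f.eMap e).take (m+1)), e) ∈ AttSet Γ f := by
  obtain ⟨hm, hgm⟩ := List.getElem?_eq_some_iff.mp (show (f.eMap e)[m]? = some (Γ.bar e) from h)
  have hch : List.Chain' Γ.NB (f.eMap e) := (f.eMap_reduced e).2
  have hhead : (Γ.brev ((f.eMap e).take (m+1))).head? = some e := by
    rw [Γ.brev_take_head (by omega) (by omega)]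
    have h1 : (f.eMap e)[m+1-1]'(by omega) = (f.eMap e)[m]'hm := by congr 1
    rw [h1, hgm, Γ.bar_involutive]
  refine ⟨?_, rfl, hhead, ?_⟩
  · refine Γ.fpath_brev_take f e (m+1) (by omega) (by omega) ?_
    intro a ha
    rw [hhead] at ha
    rw [← Option.some_inj.mp ha]
  · show (Γ.red (Γ.bar e :: (Γ.brev ((f.eMap e).take (m+1)) ++ f.eMap e))).head?
      = some (Γ.bar e)
    rw [red_cons, Γ.red_brev_take hch (m+1)]
    rcases hx : (f.eMap e).drop (m+1) with _ | ⟨b, t⟩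
    · rw [step_nil]; rfl
    · have hlt : m + 1 < (f.eMap e).length := by
        by_contra hcon
        rw [List.drop_of_length_le (by omega)] at hx
        exact (List.cons_ne_nil _ _) hx.symm
      have hb : b = (f.eMap e)[m+1]'hlt := by
        rw [List.drop_eq_getElem_cons hlt] at hx
        exact ((List.cons.injEq .. ▸ hx).1).symm
      have hne : b ≠ Γ.bar (Γ.bar e) := by
        rw [Γ.bar_involutive, hb]
        intro hcon
        exact (chain'_rel hch (i := m) (by omega)) (by rw [hcon, hgm, Γ.bar_involutive])
      rw [step_cons, if_neg hne]
      rfl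

end CGraph
namespace CGraph
variable (Γ : CGraph) [DecidableEq Γ.E]

set_option linter.unusedSectionVars false

lemma red_append_full {μ w : List Γ.E} (hμ : List.Chain' Γ.NB μ)
    (hw : List.Chain' Γ.NB w)
    (hne : ∀ a, μ.head? = some a → (Γ.red (μ ++ w)).head? ≠ some a) :
    μ = Γ.brev (w.take μ.length) ∧ μ.length ≤ w.length ∧
      Γ.red (μ ++ w) = w.drop μ.length := by
  obtain ⟨k, hk1, hk2, hdrop, hred, hch⟩ := Γ.red_append hμ hw
  have hk : k = μ.length := by
    by_contra hcon
    have hklt : k < μ.length := lt_of_le_of_ne hk1 hcon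
    obtain ⟨a, μ', rfl⟩ : ∃ a μ', μ = a :: μ' := by
      cases μ with
      | nil => simp at hklt
      | cons a μ' => exact ⟨a, μ', rfl⟩
    refine hne a rfl ?_
    rw [hred, show (a :: μ').length - k = ((μ').length - k) + 1 by
      simp only [List.length_cons] at hklt ⊢; omega, List.take_succ_cons, List.cons_append]
    rfl
  subst hk
  exact ⟨by rw [← hdrop, Nat.sub_self, List.drop_zero],
    hk2,
    by rw [hred, Nat.sub_self, List.take_zero, List.nil_append]⟩

lemma fromRep_mem (f : GraphMap Γ) {x : Γ.V × List Γ.E × Γ.E} (hx : x ∈ RepSet Γ f) :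
    (f.eMap x.2.2)[x.2.1.length]? = some x.2.2 ∧
      x = (Γ.src x.2.2, Γ.brev ((f.eMap x.2.2).take x.2.1.length), x.2.2) := by
  obtain ⟨hF, hsrc, h3, h4⟩ := hx
  obtain ⟨v, μ, e⟩ := x
  simp only at hF hsrc h3 h4 ⊢
  have hμch : List.Chain' Γ.NB μ := hF.1.2
  have hwch : List.Chain' Γ.NB (f.eMap e) := (f.eMap_reduced e).2
  rw [red_cons] at h4
  have hR : (Γ.red (μ ++ f.eMap e)).head? = some e := by
    rcases hR' : Γ.red (μ ++ f.eMap e) with _ | ⟨b, t⟩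
    · rw [hR', step_nil] at h4
      exact absurd rfl h4
    · rw [hR', step_cons] at h4
      by_cases hbe : b = Γ.bar (Γ.bar e)
      · rw [Γ.bar_involutive] at hbe
        simp [hR', hbe]
      · rw [if_neg hbe] at h4
        exact absurd rfl h4
  obtain ⟨hμeq, hlen, hredμ⟩ := Γ.red_append_full hμch hwch (by
    intro a ha hra
    rw [hra] at hR
    rw [Option.some_inj.mp hR] at ha
    exact h3 ha)
  refine ⟨?_, ?_⟩
  · rw [hredμ, List.head?_drop] at hR
    exact hR
  · exact Prod.ext hsrc.symm (Prod.ext hμeq rfl)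

lemma fromAtt_mem (f : GraphMap Γ) {x : Γ.V × List Γ.E × Γ.E} (hx : x ∈ AttSet Γ f) :
    1 ≤ x.2.1.length ∧ (f.eMap x.2.2)[x.2.1.length - 1]? = some (Γ.bar x.2.2) ∧
      x = (Γ.src x.2.2, Γ.brev ((f.eMap x.2.2).take x.2.1.length), x.2.2) := by
  obtain ⟨hF, hsrc, h3, h4⟩ := hx
  obtain ⟨v, μ, e⟩ := x
  simp only at hF hsrc h3 h4 ⊢
  have hμch : List.Chain' Γ.NB μ := hF.1.2
  have hwch : List.Chain' Γ.NB (f.eMap e) := (f.eMap_reduced e).2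
  rw [red_cons] at h4
  obtain ⟨k, hk1, hk2, hdrop, hred, hch⟩ := Γ.red_append hμch hwch
  have hRne : (Γ.red (μ ++ f.eMap e)).head? ≠ some e := by
    rcases hR' : Γ.red (μ ++ f.eMap e) with _ | ⟨b, t⟩
    · simp
    · rw [hR', step_cons] at h4
      by_cases hbe : b = Γ.bar (Γ.bar e)
      · rw [if_pos hbe] at h4
        exfalso
        rw [Γ.bar_involutive] at hbe
        subst hbe
        obtain ⟨c, t', rfl⟩ : ∃ c t', t = c :: t' := by
          cases t with
          | nil => simp at h4
          | cons c t' => exact ⟨c, t', rfl⟩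
        have hc : c = Γ.bar b := by simpa using h4
        have := hR' ▸ hch
        exact (List.isChain_cons_cons.mp this).1 hc
      · intro hcon
        apply hbe
        rw [Γ.bar_involutive]
        exact Option.some_inj.mp hcon
  obtain ⟨hμeq, hlen, hredμ⟩ := Γ.red_append_full hμch hwch (by
    intro a ha hra
    have hae : some e = some a := by rw [← h3, ha]
    obtain rfl : e = a := Option.some_inj.mp hae
    exact hRne hra)
  have hμne : 1 ≤ μ.length := by
    cases μ with
    | nil => simp at h3
    | cons a t => simp
  refine ⟨hμne, ?_, Prod.ext hsrc.symm (Prod.ext hμeq rfl)⟩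
  have hh : μ.head? = some (Γ.bar ((f.eMap e)[μ.length - 1]'(by omega))) := by
    conv_lhs => rw [hμeq]
    exact Γ.brev_take_head hμne hlen
  have hh2 : some (Γ.bar ((f.eMap e)[μ.length - 1]'(by omega))) = some e :=
    hh.symm.trans h3
  have hW : (f.eMap e)[μ.length - 1]'(by omega) = Γ.bar e := by
    have := congrArg Γ.bar (Option.some_inj.mp hh2)
    rwa [Γ.bar_involutive] at this
  rw [List.getElem?_eq_getElem (by omega), hW]

end CGraph


/-- Proposition 7.2 (Goldstein–Turner, Turner, Cohen–Lustig): for a finite graph `Γ`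
and a graph map `f` sending edges to reduced edge paths, the repelling edges of `D_f`
are in bijection with the occurrences of `E` in `f(E)` and the attracting edges with
the occurrences of `Ē` in `f(E)`; in particular the set of exceptional edges of `D_f`
is finite, of cardinality at most the total length of the images `f(E)`. -/
theorem exceptional_edges_classification (Γ : CGraph) [DecidableEq Γ.E]
    [Fintype Γ.E] [Fintype Γ.V] (f : GraphMap Γ) :
    Nonempty (↥(RepSet Γ f) ≃ ↥(OccRep Γ f)) ∧
    Nonempty (↥(AttSet Γ f) ≃ ↥(OccAtt Γ f)) ∧
    (RepSet Γ f ∪ AttSet Γ f).Finite ∧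
    Nat.card ↥(RepSet Γ f ∪ AttSet Γ f) ≤ ∑ e : Γ.E, (f.eMap e).length := by
  classical
  -- the two explicit bijections
  have eR : ↥(RepSet Γ f) ≃ ↥(OccRep Γ f) :=
    { toFun := fun x => ⟨(x.1.2.2, x.1.2.1.length), (Γ.fromRep_mem f x.2).1⟩
      invFun := fun p =>
        ⟨(Γ.src p.1.1, Γ.brev ((f.eMap p.1.1).take p.1.2), p.1.1), Γ.toRep_mem f p.2⟩
      left_inv := fun x => Subtype.ext ((Γ.fromRep_mem f x.2).2).symm
      right_inv := fun p => by
        obtain ⟨hn, -⟩ := List.getElem?_eq_some_iff.mp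
          (show (f.eMap p.1.1)[p.1.2]? = some p.1.1 from p.2)
        refine Subtype.ext (Prod.ext rfl ?_)
        show (Γ.brev ((f.eMap p.1.1).take p.1.2)).length = p.1.2
        simp [CGraph.brev, List.length_take]
        omega }
  have eA : ↥(AttSet Γ f) ≃ ↥(OccAtt Γ f) :=
    { toFun := fun x => ⟨(x.1.2.2, x.1.2.1.length - 1), (Γ.fromAtt_mem f x.2).2.1⟩
      invFun := fun p =>
        ⟨(Γ.src p.1.1, Γ.brev ((f.eMap p.1.1).take (p.1.2 + 1)), p.1.1), Γ.toAtt_mem f p.2⟩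
      left_inv := fun x => by
        have h1 := (Γ.fromAtt_mem f x.2).1
        refine Subtype.ext ?_
        show (Γ.src x.1.2.2, Γ.brev ((f.eMap x.1.2.2).take (x.1.2.1.length - 1 + 1)),
          x.1.2.2) = x.1
        rw [show x.1.2.1.length - 1 + 1 = x.1.2.1.length by omega]
        exact ((Γ.fromAtt_mem f x.2).2.2).symm
      right_inv := fun p => by
        obtain ⟨hn, -⟩ := List.getElem?_eq_some_iff.mp
          (show (f.eMap p.1.1)[p.1.2]? = some (Γ.bar p.1.1) from p.2)
        refine Subtype.ext (Prod.ext rfl ?_)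
        show (Γ.brev ((f.eMap p.1.1).take (p.1.2 + 1))).length - 1 = p.1.2
        simp [CGraph.brev, List.length_take]
        omega }
  -- the finite ambient set of occurrences
  set T : Finset (Γ.E × ℕ) :=
    Finset.univ.biUnion (fun e => (Finset.range ((f.eMap e).length)).image fun n => (e, n))
    with hT
  have hsubR : OccRep Γ f ⊆ ↑T := by
    rintro ⟨e, n⟩ hp
    obtain ⟨hn, -⟩ := List.getElem?_eq_some_iff.mp (show (f.eMap e)[n]? = some e from hp)
    simp only [hT, Finset.coe_biUnion, Finset.mem_coe, Finset.mem_univ, Set.mem_iUnion,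
      Finset.mem_image, Finset.mem_range]
    exact ⟨e, trivial, n, hn, rfl⟩
  have hsubA : OccAtt Γ f ⊆ ↑T := by
    rintro ⟨e, n⟩ hp
    obtain ⟨hn, -⟩ := List.getElem?_eq_some_iff.mp (show (f.eMap e)[n]? = some (Γ.bar e) from hp)
    simp only [hT, Finset.coe_biUnion, Finset.mem_coe, Finset.mem_univ, Set.mem_iUnion,
      Finset.mem_image, Finset.mem_range]
    exact ⟨e, trivial, n, hn, rfl⟩
  have hTcard : T.card ≤ ∑ e : Γ.E, (f.eMap e).length := by
    refine Finset.card_biUnion_le.trans (Finset.sum_le_sum fun e _ => ?_)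
    exact Finset.card_image_le.trans (by rw [Finset.card_range])
  have hOccRfin : (OccRep Γ f).Finite := T.finite_toSet.subset hsubR
  have hOccAfin : (OccAtt Γ f).Finite := T.finite_toSet.subset hsubA
  have hRfin : (RepSet Γ f).Finite := by
    rw [← Set.finite_coe_iff]
    have := hOccRfin.to_subtype
    exact Finite.of_equiv _ eR.symm
  have hAfin : (AttSet Γ f).Finite := by
    rw [← Set.finite_coe_iff]
    have := hOccAfin.to_subtype
    exact Finite.of_equiv _ eA.symm
  have hdisj : Disjoint (OccRep Γ f) (OccAtt Γ f) := by
    rw [Set.disjoint_left]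
    rintro ⟨e, n⟩ hp hq
    have h1 : (f.eMap e)[n]? = some e := hp
    have h2 : (f.eMap e)[n]? = some (Γ.bar e) := hq
    exact Γ.bar_ne e (Option.some_inj.mp (h2.symm.trans h1))
  refine ⟨⟨eR⟩, ⟨eA⟩, hRfin.union hAfin, ?_⟩
  calc Nat.card ↥(RepSet Γ f ∪ AttSet Γ f)
      = (RepSet Γ f ∪ AttSet Γ f).ncard := Nat.card_coe_set_eq _
    _ ≤ (RepSet Γ f).ncard + (AttSet Γ f).ncard := Set.ncard_union_le _ _
    _ = (OccRep Γ f).ncard + (OccAtt Γ f).ncard := by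
        rw [← Nat.card_coe_set_eq, ← Nat.card_coe_set_eq,
          ← Nat.card_coe_set_eq, ← Nat.card_coe_set_eq,
          Nat.card_congr eR, Nat.card_congr eA]
    _ = (OccRep Γ f ∪ OccAtt Γ f).ncard := (Set.ncard_union_eq hdisj hOccRfin hOccAfin).symm
    _ ≤ (↑T : Set (Γ.E × ℕ)).ncard :=
        Set.ncard_le_ncard (Set.union_subset hsubR hsubA) T.finite_toSet
    _ = T.card := Set.ncard_coe_finset T
    _ ≤ ∑ e : Γ.E, (f.eMap e).length := hTcard
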